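/- Suppose T : ℝ^d → ℝ^d is a diffeomorphism such that T(f(u)) = h(u) for all u, where f is a bijective TMI map with differentiable inverse whose i-th inverse component depends only on x_{pa(i)} ∪ {i}, and h is component-wise with h_i'(u_i) ≠ 0. Then the i-th component of T(x) depends only on x_j for j ∈ pa(i) ∪ {i}; in particular ∂T_i/∂x_j = 0 whenever j ∉ pa(i) ∪ {i}. -/

import Mathlib

/-- Causal consistency: suppose `T : ℝ^d → ℝ^d` is differentiable and satisfies
`T (f u) = h u` for all `u`, where `f` is a bijection with (differentiable) inverse `g`
whose `i`-th component depends only on the coordinates `pa i ∪ {i}`, and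
`h u i = H i (u i)` is component-wise with `(H i)' ≠ 0`.  Then the `i`-th component of
`T` depends only on the coordinates `x_j` for `j ∈ pa i ∪ {i}`; in particular the
partial derivative `∂T_i/∂x_j` vanishes whenever `j ∉ pa i ∪ {i}`. -/
theorem causal_consistency_forward {d : ℕ}
    (pa : Fin d → Finset (Fin d))
    (f g : (Fin d → ℝ) → (Fin d → ℝ))
    (hbij : Function.Bijective f)
    (hgl : Function.LeftInverse g f) (hgr : Function.RightInverse g f)
    (hgdiff : Differentiable ℝ g)
    (hgdep : ∀ i : Fin d, ∀ x y : Fin d → ℝ,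
      (∀ j, (j ∈ pa i ∨ j = i) → x j = y j) → g x i = g y i)
    (H : Fin d → ℝ → ℝ)
    (hH : ∀ i, Differentiable ℝ (H i)) (hH' : ∀ i t, deriv (H i) t ≠ 0)
    (T : (Fin d → ℝ) → (Fin d → ℝ)) (hTdiff : Differentiable ℝ T)
    (hTf : ∀ u : Fin d → ℝ, T (f u) = fun i => H i (u i)) :
    (∀ i : Fin d, ∀ x y : Fin d → ℝ,
      (∀ j, (j ∈ pa i ∨ j = i) → x j = y j) → T x i = T y i) ∧
    (∀ x : Fin d → ℝ, ∀ i j : Fin d, j ∉ pa i → j ≠ i →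
      fderiv ℝ T x (Pi.single j 1) i = 0) := by
  have key : ∀ x : Fin d → ℝ, ∀ i, T x i = H i (g x i) := by
    intro x i
    have := congrFun (hTf (g x)) i
    rwa [hgr x] at this
  constructor
  · intro i x y hxy
    rw [key x i, key y i, hgdep i x y hxy]
  · intro x i j hj hji
    set v : Fin d → ℝ := Pi.single j 1 with hv
    -- the curve t ↦ x + t • v
    have hline : HasDerivAt (fun t : ℝ => x + t • v) v 0 := by
      simpa using ((hasDerivAt_id (0:ℝ)).smul_const v).const_add x
    have hcomp : HasDerivAt (fun t : ℝ => T (x + t • v) i)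
        (fderiv ℝ T x v i) 0 := by
      have hT : HasFDerivAt T (fderiv ℝ T x) (x + (0:ℝ) • v) := by simpa using (hTdiff x).hasFDerivAt
      have := (HasFDerivAt.comp_hasDerivAt (f := fun t : ℝ => x + t • v) (0:ℝ) hT hline)
      exact (hasDerivAt_pi.mp this) i
    have hconst : (fun t : ℝ => T (x + t • v) i) = fun _ => H i (g x i) := by
      funext t
      rw [key (x + t • v) i]
      congr 1
      apply hgdep i
      intro k hk
      have hkj : k ≠ j := by
        rintro rfl
        rcases hk with hk | hk
        · exact hj hk
        · exact hji hk
      simp [hv, Pi.single_apply, hkj]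
    have h0 : HasDerivAt (fun _ : ℝ => H i (g x i)) (fderiv ℝ T x v i) 0 := by
      rw [← hconst]; exact hcomp
    exact h0.unique (hasDerivAt_const 0 _)
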